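/- arXiv:1811.03184 — 6 statements merged into one kernel-verified Lean document; each statement's English description precedes it below -/
import Mathlib

section
/- Let Q, P : ℝ → M_n(ℝ) be differentiable matrix-valued curves, and suppose they satisfy the symmetric representation of the generalized rigid body equations: Q̇(t) = Q(t)·Ω(t) and Ṗ(t) = P(t)·Ω(t), where Ω(t) = 𝓘⁻¹(Q(t)ᵀP(t) − P(t)ᵀQ(t)). Then the curve Π(t) := Q(t)ᵀP(t) − P(t)ᵀQ(t) satisfies the n-dimensional Euler equation Π̇(t) = Π(t)·Ω(t) − Ω(t)·Π(t). -/
open Matrix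

/-- If differentiable curves `Q, P : ℝ → Mₙ(ℝ)` satisfy the symmetric
representation `Q̇ = QΩ`, `Ṗ = PΩ` with `Ω(t)` skew-symmetric and `𝓘(Ω(t)) = QᵀP − PᵀQ`
(i.e. `Ω(t) = 𝓘⁻¹(QᵀP − PᵀQ)`, where `𝓘(Ω) = ΛΩ + ΩΛ`), then
`Π(t) := Q(t)ᵀP(t) − P(t)ᵀQ(t)` satisfies the Euler equation `Π̇ = ΠΩ − ΩΠ`. -/
theorem symmetric_representation_implies_euler
    {n : ℕ} (Λ : Fin n → ℝ) (hΛ : ∀ i j : Fin n, i ≠ j → 0 < Λ i + Λ j)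
    (Q P Ω : ℝ → Matrix (Fin n) (Fin n) ℝ)
    (hΩskew : ∀ t : ℝ, (Ω t)ᵀ = -(Ω t))
    (hΩ : ∀ t : ℝ,
      Matrix.diagonal Λ * Ω t + Ω t * Matrix.diagonal Λ = (Q t)ᵀ * P t - (P t)ᵀ * Q t)
    (hQ : ∀ (t : ℝ) (i j : Fin n), HasDerivAt (fun s => Q s i j) ((Q t * Ω t) i j) t)
    (hP : ∀ (t : ℝ) (i j : Fin n), HasDerivAt (fun s => P s i j) ((P t * Ω t) i j) t) :
    ∀ (t : ℝ) (i j : Fin n),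
      HasDerivAt (fun s => ((Q s)ᵀ * P s - (P s)ᵀ * Q s) i j)
        ((((Q t)ᵀ * P t - (P t)ᵀ * Q t) * Ω t
          - Ω t * ((Q t)ᵀ * P t - (P t)ᵀ * Q t)) i j) t := by
  intro t i j
  have key : ((Q t * Ω t)ᵀ * P t + (Q t)ᵀ * (P t * Ω t))
      - ((P t * Ω t)ᵀ * Q t + (P t)ᵀ * (Q t * Ω t))
      = ((Q t)ᵀ * P t - (P t)ᵀ * Q t) * Ω t
        - Ω t * ((Q t)ᵀ * P t - (P t)ᵀ * Q t) := by
    rw [Matrix.transpose_mul, Matrix.transpose_mul, hΩskew t]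
    noncomm_ring
  have h1 : HasDerivAt (fun s => ∑ k, Q s k i * P s k j)
      (∑ k, ((Q t * Ω t) k i * P t k j + Q t k i * (P t * Ω t) k j)) t :=
    HasDerivAt.fun_sum fun k _ => (hQ t k i).mul (hP t k j)
  have h2 : HasDerivAt (fun s => ∑ k, P s k i * Q s k j)
      (∑ k, ((P t * Ω t) k i * Q t k j + P t k i * (Q t * Ω t) k j)) t :=
    HasDerivAt.fun_sum fun k _ => (hP t k i).mul (hQ t k j)
  have h := h1.sub h2
  have entry : (∑ k, ((Q t * Ω t) k i * P t k j + Q t k i * (P t * Ω t) k j))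
      - (∑ k, ((P t * Ω t) k i * Q t k j + P t k i * (Q t * Ω t) k j))
      = (((Q t)ᵀ * P t - (P t)ᵀ * Q t) * Ω t
        - Ω t * ((Q t)ᵀ * P t - (P t)ᵀ * Q t)) i j := by
    rw [← key]
    simp only [Matrix.add_apply, Matrix.sub_apply, Matrix.mul_apply,
      Matrix.transpose_apply, Finset.sum_add_distrib]
  rw [entry] at h
  have funeq : (fun s => ((Q s)ᵀ * P s - (P s)ᵀ * Q s) i j)
      = fun s => (∑ k, Q s k i * P s k j) - ∑ k, P s k i * Q s k j := by
    ext s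
    simp [Matrix.mul_apply, Matrix.transpose_apply]
  rw [funeq]
  exact h
end

section
/- Let Z : ℝ → M_{2n×n}(ℝ) be a differentiable curve satisfying Ż(t) = Z(t)·Ω(t) where Ω(t) ∈ M_n(ℝ) is skew-symmetric for every t (in particular this holds for solutions of the symmetric representation, where Ω(t) = 𝓘⁻¹(Z(t)ᵀ𝕁Z(t))). Then 𝐉(Z(t)) = 𝕁Z(t)Z(t)ᵀ is constant in t; equivalently, writing Z = [Q; P] in n×n blocks, the matrices Q(t)Q(t)ᵀ, P(t)P(t)ᵀ, and P(t)Q(t)ᵀ are all constant in t. -/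
open Matrix

/-- The standard symplectic matrix `𝕁 = [[0, I], [−I, 0]]` of size `2n × 2n`. -/
def symplJ (n : ℕ) : Matrix (Fin n ⊕ Fin n) (Fin n ⊕ Fin n) ℝ :=
  Matrix.fromBlocks 0 1 (-1) 0

/-- If a differentiable curve `Z : ℝ → M_{2n×n}(ℝ)` satisfies
`Ż(t) = Z(t)·Ω(t)` with `Ω(t)` skew-symmetric for all `t`, then the momentum map
`𝐉(Z(t)) = 𝕁Z(t)Z(t)ᵀ` is constant in `t`; equivalently `Z(t)Z(t)ᵀ` is constant in `t`
(so that, in blocks `Z = [Q; P]`, the matrices `QQᵀ`, `PPᵀ`, and `PQᵀ` are constant). -/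
theorem momentum_map_J_conserved
    {n : ℕ} (Z : ℝ → Matrix (Fin n ⊕ Fin n) (Fin n) ℝ)
    (Ω : ℝ → Matrix (Fin n) (Fin n) ℝ)
    (hΩskew : ∀ t : ℝ, (Ω t)ᵀ = -(Ω t))
    (hZ : ∀ (t : ℝ) (i : Fin n ⊕ Fin n) (j : Fin n),
      HasDerivAt (fun s => Z s i j) ((Z t * Ω t) i j) t) :
    (∀ t : ℝ, symplJ n * Z t * (Z t)ᵀ = symplJ n * Z 0 * (Z 0)ᵀ) ∧
    (∀ t : ℝ, Z t * (Z t)ᵀ = Z 0 * (Z 0)ᵀ) := by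
  have key : ∀ t : ℝ, Z t * (Z t)ᵀ = Z 0 * (Z 0)ᵀ := by
    intro t
    ext i j
    have h : ∀ s : ℝ, HasDerivAt (fun u => (Z u * (Z u)ᵀ) i j) 0 s := by
      intro s
      have h1 : HasDerivAt (fun u => ∑ k, Z u i k * Z u j k)
          (∑ k, ((Z s * Ω s) i k * Z s j k + Z s i k * (Z s * Ω s) j k)) s :=
        HasDerivAt.fun_sum fun k _ => (hZ s i k).mul (hZ s j k)
      have h2 : (∑ k, ((Z s * Ω s) i k * Z s j k + Z s i k * (Z s * Ω s) j k)) = 0 := by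
        have he : ∑ k, ((Z s * Ω s) i k * Z s j k + Z s i k * (Z s * Ω s) j k)
            = (Z s * Ω s * (Z s)ᵀ + Z s * (Z s * Ω s)ᵀ) i j := by
          simp [Matrix.add_apply, Matrix.mul_apply, Matrix.transpose_apply,
            Finset.sum_add_distrib, mul_comm]
        rw [he, Matrix.transpose_mul, hΩskew]
        simp [Matrix.mul_assoc]
      have h3 := h2 ▸ h1
      exact h3
    have hd : Differentiable ℝ (fun u => (Z u * (Z u)ᵀ) i j) :=
      fun s => (h s).differentiableAt
    have hz : ∀ s, deriv (fun u => (Z u * (Z u)ᵀ) i j) s = 0 :=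
      fun s => (h s).deriv
    exact is_const_of_deriv_eq_zero hd hz t 0
  refine ⟨fun t => ?_, key⟩
  rw [Matrix.mul_assoc, key t, Matrix.mul_assoc]
end

section
/- Let Z₁, Z₂ ∈ M_{2n×n}(ℝ) both have rank n, and suppose 𝐉(Z₁) = 𝐉(Z₂), i.e. 𝕁Z₁Z₁ᵀ = 𝕁Z₂Z₂ᵀ (equivalently Z₁Z₁ᵀ = Z₂Z₂ᵀ). Then there exists R ∈ O(n) such that Z₂ = Z₁R. That is, each level set of the momentum map 𝐉 restricted to the full-rank matrices is a single O(n)-orbit. -/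
open Matrix

lemma isUnit_of_rank_eq_card {n : ℕ} (A : Matrix (Fin n) (Fin n) ℝ) (h : A.rank = n) :
    IsUnit A := by
  rw [← Matrix.mulVec_surjective_iff_isUnit]
  have : LinearMap.range A.mulVecLin = ⊤ := by
    apply Submodule.eq_top_of_finrank_eq
    rw [← Matrix.rank, h]
    simp
  have hs := LinearMap.range_eq_top.mp this
  intro v
  obtain ⟨y, hy⟩ := hs v
  exact ⟨y, hy⟩

/-- If `Z₁, Z₂ ∈ M_{2n×n}(ℝ)` both have full rank `n` and
`𝐉(Z₁) = 𝐉(Z₂)`, i.e. `𝕁Z₁Z₁ᵀ = 𝕁Z₂Z₂ᵀ`, then `Z₂ = Z₁R` for some `R ∈ O(n)`: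
each level set of `𝐉` on full-rank matrices is a single `O(n)`-orbit. -/
theorem J_level_set_is_orthogonal_orbit
    {n : ℕ} (Z₁ Z₂ : Matrix (Fin n ⊕ Fin n) (Fin n) ℝ)
    (h₁ : Z₁.rank = n) (h₂ : Z₂.rank = n)
    (hJ : symplJ n * Z₁ * Z₁ᵀ = symplJ n * Z₂ * Z₂ᵀ) :
    ∃ R : Matrix (Fin n) (Fin n) ℝ, Rᵀ * R = 1 ∧ Z₂ = Z₁ * R := by
  -- 𝕁 is invertible: -𝕁 * 𝕁 = 1
  have hJ2 : (-(symplJ n)) * symplJ n = 1 := by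
    simp [symplJ, Matrix.fromBlocks_multiply, Matrix.fromBlocks_neg, ← Matrix.fromBlocks_one]
  have hZ : Z₁ * Z₁ᵀ = Z₂ * Z₂ᵀ := by
    have := congrArg (fun M => (-(symplJ n)) * M) hJ
    simp only [← Matrix.mul_assoc] at this
    rwa [hJ2, Matrix.one_mul, Matrix.one_mul] at this
  -- Gram matrices are invertible
  obtain ⟨G, hG⟩ : ∃ G, G = Z₁ᵀ * Z₁ := ⟨_, rfl⟩
  have hGu : IsUnit G.det := (Matrix.isUnit_iff_isUnit_det G).mp
    (isUnit_of_rank_eq_card G (by rw [hG, Matrix.rank_transpose_mul_self, h₁]))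
  obtain ⟨G₂, hG2⟩ : ∃ G₂, G₂ = Z₂ᵀ * Z₂ := ⟨_, rfl⟩
  have hG2u : IsUnit G₂.det := (Matrix.isUnit_iff_isUnit_det G₂).mp
    (isUnit_of_rank_eq_card G₂ (by rw [hG2, Matrix.rank_transpose_mul_self, h₂]))
  -- M := Z₁ᵀ Z₂ satisfies M Mᵀ = G²
  obtain ⟨M, hM⟩ : ∃ M, M = Z₁ᵀ * Z₂ := ⟨_, rfl⟩
  have hMMt : M * Mᵀ = G * G := by
    calc M * Mᵀ = Z₁ᵀ * (Z₂ * Z₂ᵀ) * Z₁ := by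
          simp [hM, Matrix.transpose_mul, Matrix.mul_assoc]
      _ = Z₁ᵀ * (Z₁ * Z₁ᵀ) * Z₁ := by rw [hZ]
      _ = G * G := by simp [hG, Matrix.mul_assoc]
  have hMu : IsUnit M.det := by
    have : IsUnit ((M * Mᵀ).det) := by
      rw [hMMt, Matrix.det_mul]; exact hGu.mul hGu
    rw [Matrix.det_mul] at this
    exact isUnit_of_mul_isUnit_left this
  -- define R
  refine ⟨G⁻¹ * M, ?_, ?_⟩
  · -- orthogonality: Mᵀ G⁻¹ᵀ G⁻¹ M = 1
    have hGsymm : Gᵀ = G := by simp [hG, Matrix.transpose_mul]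
    have hGinv : (G⁻¹)ᵀ = G⁻¹ := by rw [Matrix.transpose_nonsing_inv, hGsymm]
    have hMinv : Mᵀ = M⁻¹ * (G * G) := by
      rw [← hMMt, Matrix.nonsing_inv_mul_cancel_left _ _ hMu]
    rw [Matrix.transpose_mul, hGinv, hMinv]
    calc M⁻¹ * (G * G) * G⁻¹ * (G⁻¹ * M)
        = M⁻¹ * (G * ((G * G⁻¹) * (G⁻¹ * M))) := by
          simp only [Matrix.mul_assoc]
      _ = M⁻¹ * (G * (G⁻¹ * M)) := by
          rw [Matrix.mul_nonsing_inv _ hGu, Matrix.one_mul]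
      _ = M⁻¹ * ((G * G⁻¹) * M) := by rw [Matrix.mul_assoc]
      _ = M⁻¹ * M := by rw [Matrix.mul_nonsing_inv _ hGu, Matrix.one_mul]
      _ = 1 := Matrix.nonsing_inv_mul _ hMu
  · -- Z₂ = Z₁ G⁻¹ M
    have key : (Z₁ * (G⁻¹ * M) - Z₂) * Z₂ᵀ = 0 := by
      have : Z₁ * (G⁻¹ * M) * Z₂ᵀ = Z₁ * G⁻¹ * (Z₁ᵀ * (Z₂ * Z₂ᵀ)) := by
        simp [hM, Matrix.mul_assoc]
      rw [Matrix.sub_mul, this, ← hZ, sub_eq_zero]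
      calc Z₁ * G⁻¹ * (Z₁ᵀ * (Z₁ * Z₁ᵀ)) = Z₁ * (G⁻¹ * G) * Z₁ᵀ := by
            simp [hG, Matrix.mul_assoc]
        _ = Z₁ * Z₁ᵀ := by rw [Matrix.nonsing_inv_mul _ hGu, Matrix.mul_one]
    have key2 : (Z₁ * (G⁻¹ * M) - Z₂) * G₂ = 0 := by
      rw [hG2, ← Matrix.mul_assoc, key, Matrix.zero_mul]
    have := congrArg (fun A => A * G₂⁻¹) key2
    simp only [Matrix.mul_assoc, Matrix.mul_nonsing_inv _ hG2u, Matrix.mul_one,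
      Matrix.zero_mul] at this
    exact (sub_eq_zero.mp this).symm
end

section
/- Let Z₁, Z₂ ∈ M_{2n×n}(ℝ) both have rank n, and suppose 𝐌(Z₁) = 𝐌(Z₂), i.e. Z₁ᵀ𝕁Z₁ = Z₂ᵀ𝕁Z₂. Then there exists S ∈ Sp(2n,ℝ) such that Z₂ = SZ₁. That is, each level set of the momentum map 𝐌 restricted to the full-rank matrices is a single Sp(2n,ℝ)-orbit. -/
set_option linter.unusedSectionVars false
set_option maxHeartbeats 1000000

open Matrix

section WittExtension

open Module Submodule

variable {V : Type*} [AddCommGroup V] [Module ℝ V] [FiniteDimensional ℝ V]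
  (ω : LinearMap.BilinForm ℝ V)

lemma omega_sum_left {m : ℕ} (v : Fin m → V) (c : Fin m → ℝ) (u : V) :
    ω (∑ i, c i • v i) u = ∑ i, c i * ω (v i) u := by
  simp [map_sum, LinearMap.sum_apply, _root_.map_smul, LinearMap.smul_apply, smul_eq_mul]

lemma omega_sum_right {m : ℕ} (v : Fin m → V) (c : Fin m → ℝ) (u : V) :
    ω u (∑ i, c i • v i) = ∑ i, c i * ω u (v i) := by
  simp [map_sum, _root_.map_smul, smul_eq_mul]

lemma realize_pairings (hnd : LinearMap.BilinForm.Nondegenerate ω) {m : ℕ} {v : Fin m → V}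
    (hv : LinearIndependent ℝ v) (c : Fin m → ℝ) :
    ∃ x : V, ∀ i, ω x (v i) = c i := by
  classical
  set W := span ℝ (Set.range v) with hW
  let b : Basis (Fin m) ℝ W := Basis.span hv
  let g : Module.Dual ℝ W := ∑ i, c i • b.coord i
  obtain ⟨G, hG⟩ := LinearMap.dualMap_surjective_of_injective (Submodule.injective_subtype W) g
  refine ⟨(LinearMap.BilinForm.toDual ω hnd).symm G, fun i => ?_⟩
  have h1 : ω ((LinearMap.BilinForm.toDual ω hnd).symm G) (v i) = G (v i) :=
    LinearMap.BilinForm.apply_toDual_symm_apply (hB := hnd) _ _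
  rw [h1]
  have hbi : ((b i : W) : V) = v i := congrArg Subtype.val (Module.Basis.span_apply hv i)
  have h2 : G (v i) = g (b i) := by
    rw [← hbi]
    have := congrFun (congrArg (fun (f : Module.Dual ℝ W) => (f : W → ℝ)) hG) (b i)
    simpa [LinearMap.dualMap_apply] using this
  rw [h2]
  simp only [g, LinearMap.sum_apply, LinearMap.smul_apply, Basis.coord_apply,
    Basis.repr_self, smul_eq_mul, Finsupp.single_apply]
  simp

lemma witt_bases {m : ℕ} (v w : Fin m → V) (hfr : finrank ℝ V ≤ m)
    (hv : LinearIndependent ℝ v) (hw : LinearIndependent ℝ w)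
    (hg : ∀ i j, ω (v i) (v j) = ω (w i) (w j)) :
    ∃ Φ : V ≃ₗ[ℝ] V, (∀ x y, ω (Φ x) (Φ y) = ω x y) ∧ ∀ i, Φ (v i) = w i := by
  have hcard : Fintype.card (Fin m) = finrank ℝ V :=
    le_antisymm (by simpa using hv.fintype_card_le_finrank) (by simpa using hfr)
  rcases m with _ | m'
  · have h0 : finrank ℝ V = 0 := by simpa using hcard.symm
    exact ⟨LinearEquiv.refl ℝ V, fun x y => rfl, fun i => i.elim0⟩
  · let bv := basisOfLinearIndependentOfCardEqFinrank hv hcard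
    let bw := basisOfLinearIndependentOfCardEqFinrank hw hcard
    have hbv : ∀ i, bv i = v i := fun i =>
      congrFun (coe_basisOfLinearIndependentOfCardEqFinrank hv hcard) i
    have hbw : ∀ i, bw i = w i := fun i =>
      congrFun (coe_basisOfLinearIndependentOfCardEqFinrank hw hcard) i
    set Φ := bv.equiv bw (Equiv.refl _) with hΦdef
    have hΦb : ∀ i, Φ (v i) = w i := by
      intro i
      rw [← hbv, ← hbw, hΦdef, Basis.equiv_apply, Equiv.refl_apply]
    refine ⟨Φ, ?_, hΦb⟩
    have hext : ω.compl₁₂ (Φ : V →ₗ[ℝ] V) (Φ : V →ₗ[ℝ] V) = ω := by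
      apply LinearMap.ext_basis bv bv
      intro i j
      simp only [LinearMap.compl₁₂_apply, LinearEquiv.coe_coe]
      rw [hbv, hbv, hΦb, hΦb, hg]
    intro x y
    have := congrFun (congrArg (fun (B : LinearMap.BilinForm ℝ V) => (B x : V → ℝ)) hext) y
    simpa [LinearMap.compl₁₂_apply] using this

lemma witt_extend (halt : LinearMap.BilinForm.IsAlt ω)
    (hnd : LinearMap.BilinForm.Nondegenerate ω) :
    ∀ (k m : ℕ) (v w : Fin m → V), finrank ℝ V ≤ m + k →
      LinearIndependent ℝ v → LinearIndependent ℝ w →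
      (∀ i j, ω (v i) (v j) = ω (w i) (w j)) →
      ∃ Φ : V ≃ₗ[ℝ] V, (∀ x y, ω (Φ x) (Φ y) = ω x y) ∧ ∀ i, Φ (v i) = w i := by
  intro k
  induction k with
  | zero =>
    intro m v w hfr hv hw hg
    exact witt_bases ω v w (by simpa using hfr) hv hw hg
  | succ k IH =>
    intro m v w hfr hv hw hg
    by_cases hfin : finrank ℝ V ≤ m
    · exact witt_bases ω v w hfin hv hw hg
    push_neg at hfin
    have htrans : ∀ (c : Fin m → ℝ) (j : Fin m),
        ω (∑ i, c i • w i) (w j) = ω (∑ i, c i • v i) (v j) := by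
      intro c j
      rw [omega_sum_left, omega_sum_left]
      exact Finset.sum_congr rfl fun i _ => by rw [hg]
    -- key step : produce x, y extending the families
    suffices hstep : ∃ x y : V, x ∉ span ℝ (Set.range v) ∧ y ∉ span ℝ (Set.range w) ∧
        (∀ i, ω x (v i) = ω y (w i)) ∧ (∀ i, ω (v i) x = ω (w i) y) by
      obtain ⟨x, y, hxs, hys, hxy1, hxy2⟩ := hstep
      set v' : Fin (m+1) → V := Fin.snoc v x with hv'def
      set w' : Fin (m+1) → V := Fin.snoc w y with hw'def
      have hv' : LinearIndependent ℝ v' :=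
        linearIndependent_fin_snoc.mpr ⟨hv, hxs⟩
      have hw' : LinearIndependent ℝ w' :=
        linearIndependent_fin_snoc.mpr ⟨hw, hys⟩
      have hg' : ∀ i j : Fin (m+1), ω (v' i) (v' j) = ω (w' i) (w' j) := by
        intro i j
        induction i using Fin.lastCases with
        | last =>
          induction j using Fin.lastCases with
          | last => simp only [hv'def, hw'def, Fin.snoc_last]; rw [halt x, halt y]
          | cast j => simp only [hv'def, hw'def, Fin.snoc_last, Fin.snoc_castSucc]; exact hxy1 j
        | cast i =>
          induction j using Fin.lastCases with
          | last => simp only [hv'def, hw'def, Fin.snoc_last, Fin.snoc_castSucc]; exact hxy2 i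
          | cast j => simp only [hv'def, hw'def, Fin.snoc_castSucc]; exact hg i j
      obtain ⟨Φ, hΦ, hΦv⟩ := IH (m+1) v' w' (by omega) hv' hw' hg'
      refine ⟨Φ, hΦ, fun i => ?_⟩
      have := hΦv i.castSucc
      simpa [hv'def, hw'def, Fin.snoc_castSucc] using this
    by_cases hdeg : ∃ c : Fin m → ℝ, c ≠ 0 ∧ ∀ j, ω (∑ i, c i • v i) (v j) = 0
    · -- degenerate case
      obtain ⟨c, hc0, hcz⟩ := hdeg
      have hczw : ∀ j, ω (∑ i, c i • w i) (w j) = 0 := fun j => (htrans c j).trans (hcz j)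
      obtain ⟨x, hx⟩ := realize_pairings ω hnd hv c
      obtain ⟨y, hy⟩ := realize_pairings ω hnd hw c
      obtain ⟨i0, hi0⟩ := Function.ne_iff.mp hc0
      have hpos : 0 < ∑ i, c i * c i :=
        Finset.sum_pos' (fun i _ => mul_self_nonneg _)
          ⟨i0, Finset.mem_univ _, mul_self_pos.mpr (by simpa using hi0)⟩
      have hnotmem : ∀ (u : Fin m → V) (x' : V), (∀ j, ω (∑ i, c i • u i) (u j) = 0) →
          (∀ i, ω x' (u i) = c i) → x' ∉ span ℝ (Set.range u) := by
        intro u x' hcz' hx' hmem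
        have h1 : ∀ z ∈ span ℝ (Set.range u), ω (∑ i, c i • u i) z = 0 := by
          intro z hz
          induction hz using Submodule.span_induction with
          | mem z hz => obtain ⟨j, rfl⟩ := hz; exact hcz' j
          | zero => simp
          | add a b _ _ ha hb => rw [map_add, ha, hb, add_zero]
          | smul t a _ ha => rw [LinearMap.map_smul, ha, smul_zero]
        have h2 : ω x' (∑ i, c i • u i) = ∑ i, c i * c i := by
          rw [omega_sum_right]
          exact Finset.sum_congr rfl fun i _ => by rw [hx']
        have h3 := LinearMap.BilinForm.IsAlt.neg_eq halt x' (∑ i, c i • u i)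
        rw [h1 x' hmem, h2] at h3
        linarith
      exact ⟨x, y, hnotmem v x hcz hx, hnotmem w y hczw hy,
        fun i => by rw [hx, hy], fun i => by
          rw [← LinearMap.BilinForm.IsAlt.neg_eq halt x (v i),
            ← LinearMap.BilinForm.IsAlt.neg_eq halt y (w i), hx, hy]⟩
    · -- nondegenerate case
      push_neg at hdeg
      have hdegv : ∀ c : Fin m → ℝ, (∀ j, ω (∑ i, c i • v i) (v j) = 0) → c = 0 := by
        intro c hcz
        by_contra hc0
        obtain ⟨j, hj⟩ := hdeg c hc0
        exact hj (hcz j)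
      have hdegw : ∀ c : Fin m → ℝ, (∀ j, ω (∑ i, c i • w i) (w j) = 0) → c = 0 := by
        intro c hcz
        exact hdegv c fun j => by rw [← htrans c j]; exact hcz j
      have key : ∀ (u : Fin m → V), LinearIndependent ℝ u →
          (∀ c : Fin m → ℝ, (∀ j, ω (∑ i, c i • u i) (u j) = 0) → c = 0) →
          ∃ x : V, x ∉ span ℝ (Set.range u) ∧ ∀ i, ω (u i) x = 0 := by
        intro u hu hdegu
        have hWfr : finrank ℝ (span ℝ (Set.range u)) = m := by
          rw [finrank_span_eq_card hu, Fintype.card_fin]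
        have hofr : finrank ℝ (ω.orthogonal (span ℝ (Set.range u))) = finrank ℝ V - m := by
          rw [LinearMap.BilinForm.finrank_orthogonal hnd, hWfr]
        have hpos : 0 < finrank ℝ (ω.orthogonal (span ℝ (Set.range u))) := by omega
        have hnt : Nontrivial (ω.orthogonal (span ℝ (Set.range u))) := finrank_pos_iff.mp hpos
        obtain ⟨x', hx'⟩ := exists_ne (0 : ω.orthogonal (span ℝ (Set.range u)))
        have hxperp : ∀ z ∈ span ℝ (Set.range u), ω z (x' : V) = 0 := fun z hz => x'.2 z hz
        refine ⟨(x' : V), fun hmem => ?_,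
          fun i => hxperp _ (Submodule.subset_span (Set.mem_range_self i))⟩
        obtain ⟨c, hc⟩ := (mem_span_range_iff_exists_fun ℝ).mp hmem
        have hc0 : c = 0 := by
          apply hdegu
          intro j
          rw [hc, ← LinearMap.BilinForm.IsAlt.neg_eq halt (u j) (x' : V),
            hxperp _ (Submodule.subset_span (Set.mem_range_self j)), neg_zero]
        rw [hc0] at hc
        simp only [Pi.zero_apply, zero_smul, Finset.sum_const_zero] at hc
        exact hx' (Subtype.ext hc.symm)
      obtain ⟨x, hxs, hxz⟩ := key v hv hdegv
      obtain ⟨y, hys, hyz⟩ := key w hw hdegw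
      refine ⟨x, y, hxs, hys, fun i => ?_, fun i => by rw [hxz, hyz]⟩
      rw [← LinearMap.BilinForm.IsAlt.neg_eq halt (v i) x,
        ← LinearMap.BilinForm.IsAlt.neg_eq halt (w i) y, hxz, hyz]

end WittExtension

/-- If `Z₁, Z₂ ∈ M_{2n×n}(ℝ)` both have full rank `n` and
`𝐌(Z₁) = 𝐌(Z₂)`, i.e. `Z₁ᵀ𝕁Z₁ = Z₂ᵀ𝕁Z₂`, then `Z₂ = SZ₁` for some `S ∈ Sp(2n,ℝ)`:
each level set of `𝐌` on full-rank matrices is a single `Sp(2n,ℝ)`-orbit. -/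
theorem M_level_set_is_symplectic_orbit
    {n : ℕ} (Z₁ Z₂ : Matrix (Fin n ⊕ Fin n) (Fin n) ℝ)
    (h₁ : Z₁.rank = n) (h₂ : Z₂.rank = n)
    (hM : Z₁ᵀ * symplJ n * Z₁ = Z₂ᵀ * symplJ n * Z₂) :
    ∃ S : Matrix (Fin n ⊕ Fin n) (Fin n ⊕ Fin n) ℝ,
      Sᵀ * symplJ n * S = symplJ n ∧ Z₂ = S * Z₁ := by
  classical
  set J' := symplJ n with hJdef
  set ω : LinearMap.BilinForm ℝ ((Fin n ⊕ Fin n) → ℝ) := Matrix.toBilin' J' with hω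
  have hωapp : ∀ x y, ω x y = x ⬝ᵥ (J' *ᵥ y) := fun x y => Matrix.toBilin'_apply' _ _ _
  have hJT : J'ᵀ = -J' := by
    ext i j
    cases i <;> cases j <;>
      simp [hJdef, symplJ, Matrix.one_apply, eq_comm]
  have hJJ : J' * J' = -1 := by
    ext i j
    cases i <;> cases j <;>
      simp [hJdef, symplJ, Matrix.mul_apply, Fintype.sum_sum_type, Matrix.one_apply,
        Finset.sum_ite_eq, Finset.sum_ite_eq']
  have halt : LinearMap.BilinForm.IsAlt ω := by
    intro x
    have h2 : x ⬝ᵥ (J' *ᵥ x) = (x ᵥ* J') ⬝ᵥ x := Matrix.dotProduct_mulVec _ _ _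
    have h3 : x ᵥ* J' = -(J' *ᵥ x) := by
      rw [← Matrix.mulVec_transpose, hJT, Matrix.neg_mulVec]
    have h4 : (-(J' *ᵥ x)) ⬝ᵥ x = -(x ⬝ᵥ (J' *ᵥ x)) := by
      rw [neg_dotProduct, dotProduct_comm]
    have := h2.trans (by rw [h3, h4])
    rw [hωapp]
    linarith
  have hnd : LinearMap.BilinForm.Nondegenerate ω := by
    refine (LinearMap.IsRefl.nondegenerate_iff_separatingLeft (LinearMap.BilinForm.IsAlt.isRefl halt)).mpr ?_
    intro x hx
    have h1 : x ᵥ* J' = 0 := by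
      funext j
      have := hx (Pi.single j 1)
      rw [hωapp, Matrix.mulVec_single] at this
      simpa [Matrix.vecMul, dotProduct, mul_comm] using this
    have h2 : x ᵥ* (J' * J') = 0 := by
      rw [← Matrix.vecMul_vecMul, h1, Matrix.zero_vecMul]
    rw [hJJ] at h2
    simpa [Matrix.vecMul_neg, Matrix.vecMul_one, neg_eq_zero] using h2
  have hli : ∀ (Z : Matrix (Fin n ⊕ Fin n) (Fin n) ℝ), Z.rank = n →
      LinearIndependent ℝ (fun i => Zᵀ i) := by
    intro Z hZ
    rw [linearIndependent_iff_card_eq_finrank_span, Fintype.card_fin, Set.finrank]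
    have : Set.range (fun i => Zᵀ i) = Set.range Z.col := rfl
    rw [this, ← Matrix.rank_eq_finrank_span_cols, hZ]
  have hgram : ∀ {κ : Type} [Fintype κ] (Z : Matrix (Fin n ⊕ Fin n) κ ℝ) (i j : κ),
      ω (Zᵀ i) (Zᵀ j) = (Zᵀ * J' * Z) i j := by
    intro κ _ Z i j
    rw [hωapp, Matrix.mul_assoc, Matrix.mul_apply]
    simp only [dotProduct, Matrix.mulVec, Matrix.mul_apply, Matrix.transpose_apply,
      dotProduct]
  obtain ⟨Φ, hΦ, hΦv⟩ := witt_extend ω halt hnd (Module.finrank ℝ ((Fin n ⊕ Fin n) → ℝ)) n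
    (fun i => Z₁ᵀ i) (fun i => Z₂ᵀ i) (Nat.le_add_left _ _) (hli Z₁ h₁) (hli Z₂ h₂)
    (fun i j => by rw [hgram, hgram, hM])
  set S := LinearMap.toMatrix' (Φ : ((Fin n ⊕ Fin n) → ℝ) →ₗ[ℝ] ((Fin n ⊕ Fin n) → ℝ)) with hSdef
  have hcol : ∀ i, Sᵀ i = Φ (Pi.single i 1) := by
    intro i
    funext r
    have hs : (fun j' => if j' = i then (1:ℝ) else 0) = Pi.single i 1 :=
      funext fun j' => (Pi.single_apply i (1:ℝ) j').symm
    simp only [hSdef, Matrix.transpose_apply, LinearMap.toMatrix'_apply, LinearEquiv.coe_coe]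
  have hmv : ∀ x, S *ᵥ x = Φ x := by
    intro x
    have h := Matrix.toLin'_toMatrix' (Φ : ((Fin n ⊕ Fin n) → ℝ) →ₗ[ℝ] ((Fin n ⊕ Fin n) → ℝ))
    calc S *ᵥ x = Matrix.toLin' S x := (Matrix.toLin'_apply _ _).symm
    _ = Φ x := by rw [hSdef, h]; rfl
  refine ⟨S, ?_, ?_⟩
  · ext i j
    rw [← hgram S i j, hcol, hcol, hΦ]
    rw [hω]
    exact Matrix.toBilin'_single _ _ _
  · ext r i
    have h1 : (S * Z₁) r i = (S *ᵥ (Z₁ᵀ i)) r := by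
      simp [Matrix.mul_apply, Matrix.mulVec, dotProduct, Matrix.transpose_apply]
    rw [h1, hmv, hΦv i]
    rfl
end

section
/- Let H(Z) = ½⟨Zᵀ𝕁Z, 𝓘⁻¹(Zᵀ𝕁Z)⟩ on M_{2n×n}(ℝ). Then the vector field X_H(Z) = Z·𝓘⁻¹(Zᵀ𝕁Z) is the Hamiltonian vector field of H with respect to ω(X,Y) = tr(Xᵀ𝕁Y): for every Z and every direction Y ∈ M_{2n×n}(ℝ), tr(X_H(Z)ᵀ 𝕁 Y) = d/ds H(Z + sY)|_{s=0}. In block form Z = [Q; P], this says Hamilton's equations for H are Q̇ = QΩ, Ṗ = PΩ with Ω = 𝓘⁻¹(QᵀP − PᵀQ). -/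
open Matrix

/-- The inner product `⟨A, B⟩ = ½ tr(AᵀB)` on `n × n` real matrices. -/
noncomputable def matIP {n : ℕ} (A B : Matrix (Fin n) (Fin n) ℝ) : ℝ :=
  (1 / 2) * Matrix.trace (Aᵀ * B)

/-- The inverse `𝓘⁻¹` of the inertia operator `𝓘(Ω) = ΛΩ + ΩΛ` on skew-symmetric
matrices: entrywise, `(𝓘⁻¹A)ᵢⱼ = Aᵢⱼ / (λᵢ + λⱼ)`. -/
noncomputable def inertiaInv {n : ℕ} (Λ : Fin n → ℝ) (A : Matrix (Fin n) (Fin n) ℝ) :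
    Matrix (Fin n) (Fin n) ℝ :=
  Matrix.of fun i j => A i j / (Λ i + Λ j)

/-- The Hamiltonian `H(Z) = ½⟨Zᵀ𝕁Z, 𝓘⁻¹(Zᵀ𝕁Z)⟩` of the symmetric representation. -/
noncomputable def symRepHam {n : ℕ} (Λ : Fin n → ℝ)
    (Z : Matrix (Fin n ⊕ Fin n) (Fin n) ℝ) : ℝ :=
  (1 / 2) * matIP (Zᵀ * symplJ n * Z) (inertiaInv Λ (Zᵀ * symplJ n * Z))

/-- The vector field `X_H(Z) = Z·𝓘⁻¹(Zᵀ𝕁Z)` is the Hamiltonian vector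
field of `H(Z) = ½⟨Zᵀ𝕁Z, 𝓘⁻¹(Zᵀ𝕁Z)⟩` for `ω(X,Y) = tr(Xᵀ𝕁Y)`: for all `Z` and all
directions `Y`, `tr(X_H(Z)ᵀ𝕁Y) = d/ds H(Z + sY)|₀`. In block form `Z = [Q; P]` this says
Hamilton's equations are `Q̇ = QΩ`, `Ṗ = PΩ` with `Ω = 𝓘⁻¹(QᵀP − PᵀQ)`. -/
theorem hamiltonian_vector_field_of_symmetric_representation
    {n : ℕ} (Λ : Fin n → ℝ) (hΛ : ∀ i j : Fin n, i ≠ j → 0 < Λ i + Λ j) :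
    (∀ Z Y : Matrix (Fin n ⊕ Fin n) (Fin n) ℝ,
      HasDerivAt (fun s : ℝ => symRepHam Λ (Z + s • Y))
        (Matrix.trace ((Z * inertiaInv Λ (Zᵀ * symplJ n * Z))ᵀ * symplJ n * Y)) 0) ∧
    (∀ Q P : Matrix (Fin n) (Fin n) ℝ,
      Matrix.fromRows Q P
          * inertiaInv Λ ((Matrix.fromRows Q P)ᵀ * symplJ n * Matrix.fromRows Q P)
        = Matrix.fromRows (Q * inertiaInv Λ (Qᵀ * P - Pᵀ * Q))
            (P * inertiaInv Λ (Qᵀ * P - Pᵀ * Q))) := by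
  constructor
  · intro Z Y
    set J := symplJ n
    set A := Zᵀ * J * Z with hA
    set Pm := Zᵀ * J * Y with hP
    set Nm := Yᵀ * J * Z with hN
    set C := Yᵀ * J * Y with hC
    have hJt : Jᵀ = -J := by
      show (symplJ n)ᵀ = -symplJ n
      simp [symplJ, Matrix.fromBlocks_transpose, Matrix.fromBlocks_neg]
    -- entrywise symmetry facts
    have hAskew : ∀ k j, A k j = - A j k := by
      intro k j
      have : Aᵀ = -A := by
        rw [hA]; simp only [Matrix.transpose_mul, Matrix.transpose_transpose, hJt]
        simp [Matrix.mul_assoc, Matrix.neg_mul, Matrix.mul_neg]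
      have := congrFun (congrFun this j) k
      simp only [Matrix.transpose_apply, Matrix.neg_apply] at this
      linarith
    have hNP : ∀ k j, Nm k j = - Pm j k := by
      intro k j
      have : Nmᵀ = -Pm := by
        rw [hN, hP]; simp only [Matrix.transpose_mul, Matrix.transpose_transpose, hJt]
        simp [Matrix.mul_assoc, Matrix.neg_mul, Matrix.mul_neg]
      have := congrFun (congrFun this j) k
      simp only [Matrix.transpose_apply, Matrix.neg_apply] at this
      linarith
    -- quadratic expansion
    have hexp : ∀ s : ℝ, (Z + s • Y)ᵀ * J * (Z + s • Y)
        = A + s • (Pm + Nm) + (s * s) • C := by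
      intro s
      simp only [Matrix.transpose_add, Matrix.transpose_smul, Matrix.add_mul,
        Matrix.mul_add, Matrix.smul_mul, Matrix.mul_smul, smul_smul]
      rw [hA, hP, hN, hC]
      module
    -- entrywise formula for the Hamiltonian along the line
    have hfun : ∀ s : ℝ, symRepHam Λ (Z + s • Y)
        = (1/4) * ∑ j, ∑ k,
            (A k j + s * (Pm k j + Nm k j) + s^2 * C k j)^2 / (Λ k + Λ j) := by
      intro s
      rw [symRepHam, matIP, hexp s]
      rw [Matrix.trace]
      simp only [Matrix.diag_apply, Matrix.mul_apply, Matrix.transpose_apply,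
        inertiaInv, Matrix.of_apply, Matrix.add_apply, Matrix.smul_apply,
        smul_eq_mul, Finset.mul_sum]
      refine Finset.sum_congr rfl fun j _ => Finset.sum_congr rfl fun k _ => ?_
      ring
    -- derivative of the explicit polynomial
    have hderiv : HasDerivAt (fun s : ℝ => (1/4) * ∑ j, ∑ k,
        (A k j + s * (Pm k j + Nm k j) + s^2 * C k j)^2 / (Λ k + Λ j))
        ((1/4) * ∑ j, ∑ k,
          (2 * A k j * (Pm k j + Nm k j)) / (Λ k + Λ j)) 0 := by
      refine HasDerivAt.const_mul _ ?_
      refine HasDerivAt.fun_sum fun j _ => HasDerivAt.fun_sum fun k _ => ?_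
      have h1 : HasDerivAt (fun s : ℝ => A k j + s * (Pm k j + Nm k j) + s^2 * C k j)
          (Pm k j + Nm k j) 0 := by
        have ha : HasDerivAt (fun _ : ℝ => A k j) 0 (0:ℝ) := hasDerivAt_const _ _
        have hb : HasDerivAt (fun s : ℝ => s * (Pm k j + Nm k j)) (Pm k j + Nm k j) (0:ℝ) :=
          hasDerivAt_mul_const _
        have hc : HasDerivAt (fun s : ℝ => s^2 * C k j) 0 (0:ℝ) := by
          simpa using (hasDerivAt_pow 2 (0:ℝ)).mul_const (C k j)
        simpa using (ha.fun_add hb).fun_add hc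
      have h2 := h1.fun_pow 2
      simp only [pow_one, Nat.cast_ofNat] at h2
      have h3 := h2.div_const (Λ k + Λ j)
      refine h3.congr_deriv ?_
      simp only [Nat.reduceSub, pow_one]
      ring
    -- assemble: rewrite the function and match the derivative value
    have heq : (fun s : ℝ => symRepHam Λ (Z + s • Y))
        = fun s : ℝ => (1/4) * ∑ j, ∑ k,
            (A k j + s * (Pm k j + Nm k j) + s^2 * C k j)^2 / (Λ k + Λ j) :=
      funext hfun
    rw [heq]
    convert hderiv using 1
    -- now show trace (...) equals the derivative value
    have htr : Matrix.trace ((Z * inertiaInv Λ A)ᵀ * J * Y)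
        = ∑ j, ∑ k, A k j * Pm k j / (Λ k + Λ j) := by
      have : (Z * inertiaInv Λ A)ᵀ * J * Y = (inertiaInv Λ A)ᵀ * Pm := by
        rw [Matrix.transpose_mul, hP]
        rw [Matrix.mul_assoc, Matrix.mul_assoc, Matrix.mul_assoc]
      rw [this, Matrix.trace]
      simp only [Matrix.diag_apply, Matrix.mul_apply, Matrix.transpose_apply,
        inertiaInv, Matrix.of_apply]
      refine Finset.sum_congr rfl fun j _ => Finset.sum_congr rfl fun k _ => ?_
      ring
    have hswap : ∑ j, ∑ k, A k j * Nm k j / (Λ k + Λ j)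
        = ∑ j, ∑ k, A k j * Pm k j / (Λ k + Λ j) := by
      calc ∑ j, ∑ k, A k j * Nm k j / (Λ k + Λ j)
          = ∑ j, ∑ k, A j k * Pm j k / (Λ j + Λ k) := by
            refine Finset.sum_congr rfl fun j _ => Finset.sum_congr rfl fun k _ => ?_
            rw [hNP, hAskew, add_comm (Λ k)]
            ring
        _ = ∑ j, ∑ k, A k j * Pm k j / (Λ k + Λ j) := Finset.sum_comm
    rw [htr]
    have hsplit : ∀ j k, (2 * A k j * (Pm k j + Nm k j)) / (Λ k + Λ j)
        = 2 * (A k j * Pm k j / (Λ k + Λ j)) + 2 * (A k j * Nm k j / (Λ k + Λ j)) := by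
      intro j k; ring
    simp only [hsplit, Finset.sum_add_distrib, ← Finset.mul_sum]
    rw [hswap]
    ring
  · intro Q P
    have h : (Matrix.fromRows Q P)ᵀ * symplJ n * Matrix.fromRows Q P = Qᵀ * P - Pᵀ * Q := by
      rw [symplJ, transpose_fromRows, fromCols_mul_fromBlocks, fromCols_mul_fromRows]
      simp [sub_eq_add_neg, Matrix.neg_mul, add_comm]
    rw [h, fromRows_mul]
end

section
/- Let Z₀ ∈ M_{2n×n}(ℝ) have rank n, and set μ₀ = 𝕁Z₀Z₀ᵀ and Π₀ = Z₀ᵀ𝕁Z₀. Then the image of the level set {Z ∈ M_{2n×n}(ℝ) : rank Z = n, 𝕁ZZᵀ = μ₀} under the momentum map 𝐌(Z) = Zᵀ𝕁Z is exactly the O(n)-coadjoint orbit {RᵀΠ₀R : R ∈ O(n)} of Π₀. -/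
open Matrix

lemma symplJ_mul_self (n : ℕ) : symplJ n * symplJ n = -1 := by
  have : (1 : Matrix (Fin n ⊕ Fin n) (Fin n ⊕ Fin n) ℝ) = Matrix.fromBlocks 1 0 0 1 :=
    (Matrix.fromBlocks_one).symm
  rw [symplJ, Matrix.fromBlocks_multiply, this]
  ext (i | i) (j | j) <;> simp [Matrix.fromBlocks]

/-- A square real matrix of full rank has unit determinant. -/
lemma isUnit_det_of_rank_eq {n : ℕ} (A : Matrix (Fin n) (Fin n) ℝ) (h : A.rank = n) :
    IsUnit A.det := by
  rw [isUnit_iff_ne_zero]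
  intro hdet
  obtain ⟨v, hv, hAv⟩ := (Matrix.exists_mulVec_eq_zero_iff).mpr hdet
  have hrange : LinearMap.range A.mulVecLin = ⊤ := by
    apply Submodule.eq_top_of_finrank_eq
    rw [← Matrix.rank, h]
    simp
  have hsurj : Function.Surjective A.mulVecLin :=
    LinearMap.range_eq_top.mp hrange
  have hinj : Function.Injective A.mulVecLin :=
    (LinearMap.injective_iff_surjective).mpr hsurj
  apply hv
  have : A.mulVecLin v = A.mulVecLin 0 := by
    simpa [Matrix.mulVecLin_apply] using hAv
  exact hinj this

/-- For `Z₀ ∈ M_{2n×n}(ℝ)` of full rank `n`, with `μ₀ = 𝕁Z₀Z₀ᵀ` and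
`Π₀ = Z₀ᵀ𝕁Z₀`, the image of the level set `{Z : rank Z = n, 𝕁ZZᵀ = μ₀}` under the
momentum map `𝐌(Z) = Zᵀ𝕁Z` is exactly the `O(n)`-coadjoint orbit `{RᵀΠ₀R : R ∈ O(n)}`
of `Π₀`. -/
theorem M_image_of_J_level_set_is_coadjoint_orbit
    {n : ℕ} (Z₀ : Matrix (Fin n ⊕ Fin n) (Fin n) ℝ) (hZ₀ : Z₀.rank = n) :
    (fun Z : Matrix (Fin n ⊕ Fin n) (Fin n) ℝ => Zᵀ * symplJ n * Z) ''
        {Z | Z.rank = n ∧ symplJ n * Z * Zᵀ = symplJ n * Z₀ * Z₀ᵀ}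
      = {M | ∃ R : Matrix (Fin n) (Fin n) ℝ,
          Rᵀ * R = 1 ∧ M = Rᵀ * (Z₀ᵀ * symplJ n * Z₀) * R} := by
  ext M
  constructor
  · rintro ⟨Z, ⟨hZrank, hZlevel⟩, rfl⟩
    -- Cancel 𝕁 : Z Zᵀ = Z₀ Z₀ᵀ
    have hG : Z * Zᵀ = Z₀ * Z₀ᵀ := by
      have := congrArg (fun X => symplJ n * X) hZlevel
      simp only [← Matrix.mul_assoc, symplJ_mul_self] at this
      simpa [Matrix.mul_assoc] using
        (neg_injective (by simpa [Matrix.neg_mul] using this))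
    set A : Matrix (Fin n) (Fin n) ℝ := Z₀ᵀ * Z₀ with hAdef
    set B : Matrix (Fin n) (Fin n) ℝ := Z₀ᵀ * Z with hBdef
    have hArank : A.rank = n := by
      rw [hAdef, Matrix.rank_transpose_mul_self, hZ₀]
    have hAunit : IsUnit A.det := isUnit_det_of_rank_eq A hArank
    have hAsymm : Aᵀ = A := by
      rw [hAdef, Matrix.transpose_mul, Matrix.transpose_transpose]
    have hBB : B * Bᵀ = A * A := by
      rw [hBdef, hAdef, Matrix.transpose_mul, Matrix.transpose_transpose]
      calc Z₀ᵀ * Z * (Zᵀ * Z₀) = Z₀ᵀ * (Z * Zᵀ) * Z₀ := by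
            simp [Matrix.mul_assoc]
        _ = Z₀ᵀ * (Z₀ * Z₀ᵀ) * Z₀ := by rw [hG]
        _ = Z₀ᵀ * Z₀ * (Z₀ᵀ * Z₀) := by simp [Matrix.mul_assoc]
    have hBunit : IsUnit B.det := by
      have : B.det * Bᵀ.det = A.det * A.det := by
        rw [← Matrix.det_mul, ← Matrix.det_mul, hBB]
      rw [Matrix.det_transpose] at this
      have hAd : A.det ≠ 0 := by
        intro h; rw [h] at hAunit; simp at hAunit
      rw [isUnit_iff_ne_zero]
      intro h
      rw [h, zero_mul] at this
      exact hAd (by nlinarith [this.symm])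
    have hAmul : A⁻¹ * A = 1 := Matrix.nonsing_inv_mul A hAunit
    have hAmul' : A * A⁻¹ = 1 := Matrix.mul_nonsing_inv A hAunit
    have hBmul : B⁻¹ * B = 1 := Matrix.nonsing_inv_mul B hBunit
    have hBmul' : B * B⁻¹ = 1 := Matrix.mul_nonsing_inv B hBunit
    set R : Matrix (Fin n) (Fin n) ℝ := A⁻¹ * B with hRdef
    have hAinvT : A⁻¹ᵀ = A⁻¹ := by rw [Matrix.transpose_nonsing_inv, hAsymm]
    have hRT : Rᵀ = Bᵀ * A⁻¹ := by rw [hRdef, Matrix.transpose_mul, hAinvT]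
    -- RᵀR = 1
    have hRorth : Rᵀ * R = 1 := by
      have hBTinv : Bᵀ * (A⁻¹ * A⁻¹) * B = 1 := by
        have h1 : A⁻¹ * A⁻¹ * (B * Bᵀ) = 1 := by
          rw [hBB]
          calc A⁻¹ * A⁻¹ * (A * A) = A⁻¹ * (A⁻¹ * A) * A := by simp [Matrix.mul_assoc]
            _ = 1 := by rw [hAmul, Matrix.mul_one, hAmul]
        -- so A⁻¹ * A⁻¹ = (B * Bᵀ)⁻¹ = Bᵀ⁻¹ * B⁻¹
        have h2 : A⁻¹ * A⁻¹ = Bᵀ⁻¹ * B⁻¹ := by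
          have hBTu : IsUnit Bᵀ.det := by rwa [Matrix.det_transpose]
          have := congrArg (fun X => X * (Bᵀ⁻¹ * B⁻¹)) h1
          simp only [Matrix.one_mul] at this
          rw [Matrix.mul_assoc (A⁻¹ * A⁻¹)] at this
          rw [show B * Bᵀ * (Bᵀ⁻¹ * B⁻¹) = B * (Bᵀ * Bᵀ⁻¹) * B⁻¹ by
            simp [Matrix.mul_assoc]] at this
          rw [Matrix.mul_nonsing_inv _ hBTu, Matrix.mul_one, hBmul',
            Matrix.mul_one] at this
          exact this
        rw [h2]
        calc Bᵀ * (Bᵀ⁻¹ * B⁻¹) * B = Bᵀ * Bᵀ⁻¹ * (B⁻¹ * B) := by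
              simp [Matrix.mul_assoc]
          _ = 1 := by
              rw [Matrix.mul_nonsing_inv _ (by rwa [Matrix.det_transpose]), hBmul,
                Matrix.mul_one]
      rw [hRT, hRdef]
      calc Bᵀ * A⁻¹ * (A⁻¹ * B) = Bᵀ * (A⁻¹ * A⁻¹) * B := by simp [Matrix.mul_assoc]
        _ = 1 := hBTinv
    have hRorth' : R * Rᵀ = 1 := mul_eq_one_comm.mp hRorth
    -- key identities
    have hRAR : Rᵀ * A * R = Bᵀ * A⁻¹ * B := by
      rw [hRT, hRdef]
      calc Bᵀ * A⁻¹ * A * (A⁻¹ * B) = Bᵀ * ((A⁻¹ * A) * A⁻¹) * B := by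
            simp [Matrix.mul_assoc]
        _ = Bᵀ * A⁻¹ * B := by rw [hAmul, Matrix.one_mul]
    -- ZᵀZ and RᵀAR are psd with equal squares
    have hZZpsd : (Zᵀ * Z).PosSemidef := by
      have := Matrix.posSemidef_conjTranspose_mul_self Z
      simpa using this
    have hApsd : A.PosSemidef := by
      have := Matrix.posSemidef_conjTranspose_mul_self Z₀
      simpa [hAdef] using this
    have hRARpsd : (Rᵀ * A * R).PosSemidef := by
      have := hApsd.conjTranspose_mul_mul_same R
      simpa [Matrix.mul_assoc] using this
    have hsq : (Zᵀ * Z) ^ 2 = (Rᵀ * A * R) ^ 2 := by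
      have h1 : (Zᵀ * Z) ^ 2 = Bᵀ * B := by
        have e : Zᵀ * Z * (Zᵀ * Z) = Zᵀ * (Z * Zᵀ) * Z := by simp [Matrix.mul_assoc]
        rw [pow_two, e, hG, hBdef]
        simp [Matrix.transpose_mul, Matrix.mul_assoc]
      have h2 : (Rᵀ * A * R) ^ 2 = Bᵀ * B := by
        rw [pow_two]
        calc Rᵀ * A * R * (Rᵀ * A * R) = Rᵀ * A * (R * Rᵀ) * (A * R) := by
              simp [Matrix.mul_assoc]
          _ = Rᵀ * (A * A) * R := by rw [hRorth']; simp [Matrix.mul_assoc]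
          _ = Bᵀ * A⁻¹ * (A * A) * (A⁻¹ * B) := by rw [hRT, hRdef]
          _ = Bᵀ * ((A⁻¹ * A) * (A * A⁻¹)) * B := by simp [Matrix.mul_assoc]
          _ = Bᵀ * B := by rw [hAmul, hAmul']; simp
      rw [h1, h2]
    have hZZeq : Zᵀ * Z = Rᵀ * A * R := by
      open scoped MatrixOrder in
      exact (CFC.sq_eq_sq_iff _ _ hZZpsd.nonneg hRARpsd.nonneg).mp hsq
    -- D := Z₀ R − Z vanishes
    have hZeq : Z₀ * R = Z := by
      have hDD : (Z₀ * R - Z)ᵀ * (Z₀ * R - Z) = 0 := by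
        have f1 : Rᵀ * Z₀ᵀ * (Z₀ * R) = Bᵀ * A⁻¹ * B := by
          rw [show Rᵀ * Z₀ᵀ * (Z₀ * R) = Rᵀ * (Z₀ᵀ * Z₀) * R by simp [Matrix.mul_assoc],
            ← hAdef, hRAR]
        have f2 : Rᵀ * Z₀ᵀ * Z = Bᵀ * A⁻¹ * B := by
          rw [show Rᵀ * Z₀ᵀ * Z = Rᵀ * (Z₀ᵀ * Z) by rw [Matrix.mul_assoc], ← hBdef, hRT]
        have f3 : Zᵀ * (Z₀ * R) = Bᵀ * A⁻¹ * B := by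
          rw [show Zᵀ * (Z₀ * R) = (Z₀ᵀ * Z)ᵀ * R by
              simp [Matrix.transpose_mul, Matrix.mul_assoc],
            ← hBdef, hRdef, ← Matrix.mul_assoc]
        have f4 : Zᵀ * Z = Bᵀ * A⁻¹ * B := by rw [hZZeq, hRAR]
        rw [Matrix.transpose_sub, Matrix.transpose_mul, Matrix.sub_mul, Matrix.mul_sub,
          Matrix.mul_sub, f1, f2, f3, f4]
        abel
      have hD0 : Z₀ * R - Z = 0 := by
        have h := Matrix.conjTranspose_mul_self_eq_zero (A := Z₀ * R - Z)
        simp only [Matrix.conjTranspose_eq_transpose_of_trivial] at h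
        exact h.mp hDD
      exact sub_eq_zero.mp hD0
    refine ⟨R, hRorth, ?_⟩
    rw [← hZeq]
    simp [Matrix.transpose_mul, Matrix.mul_assoc]
  · rintro ⟨R, hR, rfl⟩
    have hRdet : IsUnit R.det := by
      have : Rᵀ.det * R.det = 1 := by rw [← Matrix.det_mul, hR, Matrix.det_one]
      exact IsUnit.of_mul_eq_one _ (by rwa [Matrix.det_transpose] at this)
    have hRR' : R * Rᵀ = 1 := mul_eq_one_comm.mp hR
    refine ⟨Z₀ * R, ⟨?_, ?_⟩, ?_⟩
    · rw [Matrix.rank_mul_eq_left_of_isUnit_det R Z₀ hRdet, hZ₀]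
    · calc symplJ n * (Z₀ * R) * (Z₀ * R)ᵀ
          = symplJ n * Z₀ * (R * Rᵀ) * Z₀ᵀ := by
            simp [Matrix.transpose_mul, Matrix.mul_assoc]
        _ = symplJ n * Z₀ * Z₀ᵀ := by rw [hRR']; simp
    · simp [Matrix.transpose_mul, Matrix.mul_assoc]
end
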